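/- Let F be the zig-zag network of a concatenation G_{[c_1,d_1]}∘⋯∘G_{[c_t,d_t]} of star networks of order n, and for each i let π_i be the unique directed path in F from source i to sink i. Then for 1 ≤ i < j ≤ n, the paths π_i and π_j are vertex-disjoint if and only if no interval [c_k,d_k] contains both i and j. Consequently, the partial order P(F) depends only on the set of intervals {[c_1,d_1],…,[c_t,d_t]} and not on their order in the concatenation. -/

import Mathlib

namespace ZigZag

noncomputable section

attribute [local instance] Classical.propDecidable

/-- Vertices of a network of order `n` built from `t` stars:
sources, sinks and central vertices. -/
inductive V (n t : ℕ) : Type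
  | src : Fin n → V n t
  | snk : Fin n → V n t
  | ctr : Fin t → V n t
  deriving DecidableEq

/-- Data of a concatenation `G_{[c 0, d 0]} ∘ ⋯ ∘ G_{[c (t-1), d (t-1)]}` of star
networks of order `n`: pairwise distinct, pairwise non-nesting intervals
satisfying the triple-overlap condition. -/
structure IntervalData (n t : ℕ) : Type where
  c : Fin t → Fin n
  d : Fin t → Fin n
  cd_le : ∀ k, c k ≤ d k
  nonnest : ∀ k l : Fin t, k ≠ l → ¬ (c k ≤ c l ∧ d l ≤ d k)
  tripleOverlap : ∀ k l m : Fin t, k < l → l < m →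
    (c k ≤ d l ∧ c l ≤ d k) → (c l ≤ d m ∧ c m ≤ d l) →
    (c k < c l ∧ c l < c m) ∨ (c m < c l ∧ c l < c k)

variable {n t : ℕ}

/-- `i` belongs to the `k`-th interval `[c k, d k]`. -/
def IntervalData.mem (D : IntervalData n t) (k : Fin t) (i : Fin n) : Prop :=
  D.c k ≤ i ∧ i ≤ D.d k

/-- Edges of the zig-zag network associated to `D` (collapsing the parallel
central edges, i.e. keeping one path per covering pair). -/
inductive Edge (D : IntervalData n t) : V n t → V n t → Prop
  | srcCtr (i : Fin n) (k : Fin t) : D.mem k i → (∀ l, l < k → ¬ D.mem l i) →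
      Edge D (V.src i) (V.ctr k)
  | ctrSnk (i : Fin n) (k : Fin t) : D.mem k i → (∀ l, k < l → ¬ D.mem l i) →
      Edge D (V.ctr k) (V.snk i)
  | srcSnk (i : Fin n) : (∀ k, ¬ D.mem k i) → Edge D (V.src i) (V.snk i)
  | ctrCtr (i : Fin n) (k l : Fin t) : k < l → D.mem k i → D.mem l i →
      (∀ m, k < m → m < l → ¬ D.mem m i) → Edge D (V.ctr k) (V.ctr l)

/-- A directed path (a nonempty list of successively adjacent vertices)
from `x` to `y` in the digraph with edge relation `E`. -/
def PathIn (E : V n t → V n t → Prop) (p : List (V n t)) (x y : V n t) : Prop :=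
  p ≠ [] ∧ p.Chain' E ∧ p.head? = some x ∧ p.getLast? = some y

/-- A directed path from source `i` to sink `j` in the zig-zag network of `D`. -/
def IsPathFromTo (D : IntervalData n t) (p : List (V n t)) (i j : Fin n) : Prop :=
  PathIn (Edge D) p (V.src i) (V.snk j)

/-- The intervals `[c k, d k]` and `[c l, d l]` intersect. -/
def Intersects (D : IntervalData n t) (k l : Fin t) : Prop :=
  D.c k ≤ D.d l ∧ D.c l ≤ D.d k

/-- The covering relation `⋖` on the intervals of the concatenation. -/
def Cov (D : IntervalData n t) (k l : Fin t) : Prop :=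
  k < l ∧ Intersects D k l ∧
    ∀ m, k < m → m < l → ∀ i : Fin n, ¬ (D.mem k i ∧ D.mem l i ∧ D.mem m i)

/-- The strict partial order `≺` generated by the covering relation. -/
def Prec (D : IntervalData n t) : Fin t → Fin t → Prop :=
  Relation.TransGen (Cov D)

/-- A path family of type `v`: the `i`-th path runs from source `i` to sink `v i`. -/
def IsFamilyOfType (D : IntervalData n t) (fam : Fin n → List (V n t))
    (v : Equiv.Perm (Fin n)) : Prop :=
  ∀ i, IsPathFromTo D (fam i) i (v i)

/-- The path family covers the network: every edge lies on some path. -/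
def Covers (D : IntervalData n t) (fam : Fin n → List (V n t)) : Prop :=
  ∀ x y, Edge D x y → ∃ i, [x, y] <:+: fam i

/-- Bruhat order on `S_n`. -/
def BruhatLE (v w : Equiv.Perm (Fin n)) : Prop :=
  ∀ i j : Fin n,
    (Finset.univ.filter fun k : Fin n => k ≤ i ∧ j ≤ v k).card ≤
      (Finset.univ.filter fun k : Fin n => k ≤ i ∧ j ≤ w k).card

/-- `D` is interval data for the zig-zag network `F_w`: a path family of type `v`
covers it iff `v ≤ w` in Bruhat order, and such families are unique. -/
def Represents (D : IntervalData n t) (w : Equiv.Perm (Fin n)) : Prop :=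
  ∀ v : Equiv.Perm (Fin n),
    ((∃ fam, IsFamilyOfType D fam v ∧ Covers D fam) ↔ BruhatLE v w) ∧
    ∀ fam fam', IsFamilyOfType D fam v → Covers D fam →
      IsFamilyOfType D fam' v → Covers D fam' → fam = fam'

def Avoids3412 (w : Equiv.Perm (Fin n)) : Prop :=
  ¬ ∃ i1 i2 i3 i4 : Fin n, i1 < i2 ∧ i2 < i3 ∧ i3 < i4 ∧
    w i3 < w i4 ∧ w i4 < w i1 ∧ w i1 < w i2

def Avoids4231 (w : Equiv.Perm (Fin n)) : Prop :=
  ¬ ∃ i1 i2 i3 i4 : Fin n, i1 < i2 ∧ i2 < i3 ∧ i3 < i4 ∧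
    w i4 < w i2 ∧ w i2 < w i3 ∧ w i3 < w i1

def Avoids312 (w : Equiv.Perm (Fin n)) : Prop :=
  ¬ ∃ i1 i2 i3 : Fin n, i1 < i2 ∧ i2 < i3 ∧ w i2 < w i3 ∧ w i3 < w i1

/-- The source-`i`-to-sink-`i` and source-`j`-to-sink-`j` paths share a vertex. -/
def PathsIntersect (D : IntervalData n t) (i j : Fin n) : Prop :=
  ∃ p q, IsPathFromTo D p i i ∧ IsPathFromTo D q j j ∧ ∃ x, x ∈ p ∧ x ∈ q

/-- The strict order of the poset `P(F)`. -/
def PRel (D : IntervalData n t) (i j : Fin n) : Prop :=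
  i < j ∧ ¬ PathsIntersect D i j

/-- Descending star network: `c 0 > c 1 > ⋯`. -/
def Descending (D : IntervalData n t) : Prop :=
  ∀ k l : Fin t, k < l → D.c l < D.c k

/-- Incomparability for a strict order. -/
def Incomp {α : Type*} (r : α → α → Prop) (x y : α) : Prop :=
  x ≠ y ∧ ¬ r x y ∧ ¬ r y x

/-- A strict order is a unit interval order if it is (3+1)-free and (2+2)-free. -/
def UnitIntervalOrder {α : Type*} (r : α → α → Prop) : Prop :=
  (¬ ∃ a b c x, r a b ∧ r b c ∧ Incomp r x a ∧ Incomp r x b ∧ Incomp r x c) ∧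
  (¬ ∃ a b x y, r a b ∧ r x y ∧ Incomp r a x ∧ Incomp r a y ∧
      Incomp r b x ∧ Incomp r b y)

/-- `lam` is a partition of `n`. -/
def IsPartition (lam : List ℕ) (n : ℕ) : Prop :=
  lam.Pairwise (· ≥ ·) ∧ (∀ x ∈ lam, 0 < x) ∧ lam.sum = n

/-- An `F`-tableau of shape `lam` (French notation): a covering path family
together with an arrangement of the `n` source indices into rows of
lengths `lam`. -/
structure Tableau (D : IntervalData n t) (lam : List ℕ) : Type where
  fam : Fin n → List (V n t)
  typ : Equiv.Perm (Fin n)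
  isFam : IsFamilyOfType D fam typ
  covers : Covers D fam
  rows : List (List (Fin n))
  shape : rows.map List.length = lam
  nodup : rows.flatten.Nodup
  complete : ∀ i : Fin n, i ∈ rows.flatten

namespace Tableau

variable {D : IntervalData n t} {lam : List ℕ}

/-- The paths indexed by `a` and `b` share a vertex. -/
def Intersect (U : Tableau D lam) (a b : Fin n) : Prop :=
  ∃ x, x ∈ U.fam a ∧ x ∈ U.fam b

def RowClosed (U : Tableau D lam) : Prop :=
  ∀ r ∈ U.rows, (r.map ⇑U.typ).Perm r

def LeftRowStrict (U : Tableau D lam) : Prop :=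
  ∀ r ∈ U.rows, r.Chain' (· < ·)

def RowSemistrict (U : Tableau D lam) : Prop :=
  ∀ r ∈ U.rows, r.Chain' fun a b => ¬ (b < a ∧ ¬ U.Intersect a b)

def CycRowSemistrict (U : Tableau D lam) : Prop :=
  U.RowSemistrict ∧ ∀ r ∈ U.rows, ∀ a b : Fin n,
    r.getLast? = some a → r.head? = some b → ¬ (b < a ∧ ¬ U.Intersect a b)

def RowStrict (U : Tableau D lam) : Prop :=
  ∀ r ∈ U.rows, r.Chain' fun a b => a < b ∧ ¬ U.Intersect a b

def RightAnchored (U : Tableau D lam) : Prop :=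
  ∀ r ∈ U.rows, ∀ a : Fin n, r.getLast? = some a → ∀ b ∈ r, a ≤ b

def LeftAnchored (U : Tableau D lam) : Prop :=
  ∀ r ∈ U.rows, ∀ a : Fin n, r.head? = some a → ∀ b ∈ r, a ≤ b

def Cylindrical (U : Tableau D lam) : Prop :=
  ∀ r ∈ U.rows, r.map ⇑U.typ = r.rotate 1

def TypeE (U : Tableau D lam) : Prop := U.typ = 1

/-- `inv (U_1 ∘ ⋯ ∘ U_r)`: inversions of the concatenation of the rows. -/
def invConcat (U : Tableau D lam) : ℕ :=
  Set.ncard {p : Fin U.rows.flatten.length × Fin U.rows.flatten.length |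
    p.1 < p.2 ∧ U.Intersect (U.rows.flatten.get p.1) (U.rows.flatten.get p.2) ∧
      U.rows.flatten.get p.2 < U.rows.flatten.get p.1}

/-- `inv (U^R)` for a one-rowed tableau `U`. -/
def invR (U : Tableau D lam) : ℕ :=
  Set.ncard {p : Fin U.rows.flatten.length × Fin U.rows.flatten.length |
    p.1 < p.2 ∧ U.Intersect (U.rows.flatten.get p.1) (U.rows.flatten.get p.2) ∧
      U.rows.flatten.get p.1 < U.rows.flatten.get p.2}

/-- `rinv` of a single row `r`. -/
def rinvRow (U : Tableau D lam) (r : List (Fin n)) : ℕ :=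
  Set.ncard {p : Fin r.length × Fin r.length |
    p.1 < p.2 ∧ U.Intersect (r.get p.1) (r.get p.2) ∧
      U.typ (r.get p.2) < U.typ (r.get p.1)}

/-- `rinv (U_1) + ⋯ + rinv (U_r)`. -/
def rinvRowsSum (U : Tableau D lam) : ℕ := (U.rows.map U.rinvRow).sum

/-- `inv (U^tr)`: inversions between entries of distinct rows. -/
def invTr (U : Tableau D lam) : ℕ :=
  Set.ncard {p : Fin n × Fin n |
    (∃ j1 j2 : ℕ, j1 < j2 ∧ p.1 ∈ U.rows.getD j1 [] ∧ p.2 ∈ U.rows.getD j2 []) ∧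
      U.Intersect p.1 p.2 ∧ p.2 < p.1}

/-- `rinv (U^tr)`: right inversions between entries of distinct rows. -/
def rinvTr (U : Tableau D lam) : ℕ :=
  Set.ncard {p : Fin n × Fin n |
    (∃ j1 j2 : ℕ, j1 < j2 ∧ p.1 ∈ U.rows.getD j1 [] ∧ p.2 ∈ U.rows.getD j2 []) ∧
      U.Intersect p.1 p.2 ∧ U.typ p.2 < U.typ p.1}

end Tableau

/-- Row `j` of `U` has entry set `I j`. -/
def RowContents {D : IntervalData n t} {lam : List ℕ} (U : Tableau D lam)
    (I : Fin lam.length → Finset (Fin n)) : Prop :=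
  ∀ j : Fin lam.length, (U.rows.getD (j : ℕ) []).toFinset = I j

/-- `[a]_q = 1 + q + ⋯ + q^(a-1)`. -/
noncomputable def qNat (a : ℕ) : Polynomial ℤ := ∑ i ∈ Finset.range a, Polynomial.X ^ i

/-- `[a]_q! = [a]_q [a-1]_q ⋯ [1]_q`. -/
noncomputable def qFact (a : ℕ) : Polynomial ℤ := ∏ i ∈ Finset.range a, qNat (i + 1)

/-- The network is connected as an (undirected) graph. -/
def Connected (D : IntervalData n t) : Prop :=
  ∀ x y : V n t, Relation.ReflTransGen (fun a b => Edge D a b ∨ Edge D b a) x y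

noncomputable def Onum (D : IntervalData n t) : Polynomial ℤ :=
  ∏ k : Fin t, qFact ((D.d k : ℕ) - (D.c k : ℕ))

noncomputable def Oden (D : IntervalData n t) : Polynomial ℤ :=
  ∏ p : Fin t × Fin t,
    if Cov D p.1 p.2 then
      if D.c p.1 < D.c p.2 then qFact ((D.d p.1 : ℕ) - (D.c p.2 : ℕ))
      else qFact ((D.d p.2 : ℕ) - (D.c p.1 : ℕ))
    else 1

/-- The rational function `O(F)`, an element of the fraction field of `ℤ[q]`. -/
noncomputable def OF (D : IntervalData n t) : FractionRing (Polynomial ℤ) :=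
  if Connected D then
    algebraMap (Polynomial ℤ) (FractionRing (Polynomial ℤ)) (Onum D) /
      algebraMap (Polynomial ℤ) (FractionRing (Polynomial ℤ)) (Oden D)
  else 0

/-- Cycle type of a permutation, as a partition of `n` (including fixed points). -/
noncomputable def fullCycleType (v : Equiv.Perm (Fin n)) : Multiset ℕ :=
  v.cycleType + Multiset.replicate (n - v.support.card) 1

/-- `z_λ = 1^{α_1} 2^{α_2} ⋯ α_1! α_2! ⋯`. -/
noncomputable def zPart (lam : List ℕ) : ℕ :=
  lam.prod * ∏ i ∈ lam.toFinset, (lam.count i).factorial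

/-- `rinv (U(u, π))` where the one-rowed tableau `U(u,π)` lists the paths
`fam (u 0), fam (u 1), …` whose sinks are `v 0, v 1, …`. -/
def rinvU (D : IntervalData n t) (fam : Fin n → List (V n t))
    (u v : Equiv.Perm (Fin n)) : ℕ :=
  Set.ncard {p : Fin n × Fin n | p.1 < p.2 ∧
    (∃ x, x ∈ fam (u p.1) ∧ x ∈ fam (u p.2)) ∧ v p.2 < v p.1}

/-- Edges of the restricted network `F|_S`, the union of the
source-`i`-to-sink-`i` paths for `i ∈ S`. -/
def REdge (D : IntervalData n t) (S : Finset (Fin n)) (x y : V n t) : Prop :=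
  Edge D x y ∧ ∃ i ∈ S, ∃ p, IsPathFromTo D p i i ∧ [x, y] <:+: p

/-- A cylindrical one-rowed tableau of the restricted network `F|_S`. -/
structure SubRowTab (D : IntervalData n t) (S : Finset (Fin n)) : Type where
  row : List (Fin n)
  nodup : row.Nodup
  content : row.toFinset = S
  fam : Fin n → List (V n t)
  isPath : ∀ m : Fin row.length,
    PathIn (REdge D S) (fam (row.get m)) (V.src (row.get m))
      (V.snk (row.get ⟨((m : ℕ) + 1) % row.length, Nat.mod_lt _ m.pos⟩))
  covers : ∀ x y, REdge D S x y → ∃ a ∈ row, [x, y] <:+: fam a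

/-- Inversions of a one-rowed subnetwork tableau. -/
def SubRowTab.Inv {D : IntervalData n t} {S : Finset (Fin n)}
    (W : SubRowTab D S) : ℕ :=
  Set.ncard {p : Fin W.row.length × Fin W.row.length | p.1 < p.2 ∧
    (∃ x, x ∈ W.fam (W.row.get p.1) ∧ x ∈ W.fam (W.row.get p.2)) ∧
    W.row.get p.2 < W.row.get p.1}

def SubRowTab.LeftAnchored {D : IntervalData n t} {S : Finset (Fin n)}
    (W : SubRowTab D S) : Prop :=
  ∀ a : Fin n, W.row.head? = some a → ∀ b ∈ W.row, a ≤ b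

/-- The concatenation `V(F,I)_1 ∘ ⋯ ∘ V(F,I)_r` of the rows of the tableau
`V(F,I)`, as a list of source indices: each block `I j` in increasing order. -/
def Vlist {r : ℕ} (I : Fin r → Finset (Fin n)) : List (Fin n) :=
  (List.finRange r).flatMap fun j => (I j).sort (· ≤ ·)

/-- Inversions of a list of indices, filled with the type-`e` path family. -/
def invListE (D : IntervalData n t) (l : List (Fin n)) : ℕ :=
  Set.ncard {p : Fin l.length × Fin l.length | p.1 < p.2 ∧
    PathsIntersect D (l.get p.1) (l.get p.2) ∧ l.get p.2 < l.get p.1}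

/-! ### auxiliary lemmas -/

lemma noEdgeFromSnk {D : IntervalData n t} {a : Fin n} {y : V n t} :
    ¬ Edge D (V.snk a) y := by intro h; cases h

lemma noEdgeToSrc {D : IntervalData n t} {a : Fin n} {x : V n t} :
    ¬ Edge D x (V.src a) := by intro h; cases h

lemma intersects_of_mem {D : IntervalData n t} {k l : Fin t} {i : Fin n}
    (hk : D.mem k i) (hl : D.mem l i) : Intersects D k l :=
  ⟨le_trans hk.1 hl.2, le_trans hl.1 hk.2⟩

lemma edge_ctr_ctr {D : IntervalData n t} {k l : Fin t}
    (h : Edge D (V.ctr k) (V.ctr l)) : k < l ∧ Intersects D k l := by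
  cases h with
  | ctrCtr i k l hkl hk hl _ => exact ⟨hkl, intersects_of_mem hk hl⟩

lemma edge_ctr_snk {D : IntervalData n t} {k : Fin t} {a : Fin n}
    (h : Edge D (V.ctr k) (V.snk a)) : D.mem k a := by
  cases h with
  | ctrSnk i k hk _ => exact hk

/-- If `c k < c l`, `i < c l`, then the rest of a chain starting at `ctr l`
stays strictly to the right of `i`. -/
lemma noSnk_up {D : IntervalData n t} {i : Fin n} :
    ∀ (p : List (V n t)) (k l : Fin t), k < l → Intersects D k l →
      (i : Fin n) < D.c l → D.c k < D.c l →
      List.Chain (Edge D) (V.ctr l) p → V.snk i ∉ p := by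
  intro p
  induction p with
  | nil => intro k l _ _ _ _ _ h; simp at h
  | cons x q ih =>
    intro k l hkl hint hic hcc hch hmem
    rcases List.chain_cons.1 hch with ⟨he, hch'⟩
    rcases List.mem_cons.1 hmem with rfl | hmem'
    · have := edge_ctr_snk he
      exact absurd this.1 (not_le.2 hic)
    · cases x with
      | src a => exact noEdgeToSrc he
      | snk a =>
        cases q with
        | nil => simp at hmem'
        | cons y q' => exact noEdgeFromSnk (List.chain_cons.1 hch').1
      | ctr m =>
        rcases edge_ctr_ctr he with ⟨hlm, hintlm⟩
        have htri := D.tripleOverlap k l m hkl hlm hint hintlm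
        have hclm : D.c l < D.c m := by
          rcases htri with ⟨_, h2⟩ | ⟨_, h2⟩
          · exact h2
          · exact absurd hcc (not_lt.2 h2.le)
        exact ih l m hlm hintlm (hic.trans hclm) hclm hch' hmem'

/-- If `c l < c k`, `d l < i`, then the rest of a chain starting at `ctr l`
stays strictly to the left of `i`. -/
lemma noSnk_down {D : IntervalData n t} {i : Fin n} :
    ∀ (p : List (V n t)) (k l : Fin t), k < l → Intersects D k l →
      D.d l < i → D.c l < D.c k →
      List.Chain (Edge D) (V.ctr l) p → V.snk i ∉ p := by
  intro p
  induction p with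
  | nil => intro k l _ _ _ _ _ h; simp at h
  | cons x q ih =>
    intro k l hkl hint hdi hcc hch hmem
    rcases List.chain_cons.1 hch with ⟨he, hch'⟩
    rcases List.mem_cons.1 hmem with rfl | hmem'
    · have := edge_ctr_snk he
      exact absurd this.2 (not_le.2 hdi)
    · cases x with
      | src a => exact noEdgeToSrc he
      | snk a =>
        cases q with
        | nil => simp at hmem'
        | cons y q' => exact noEdgeFromSnk (List.chain_cons.1 hch').1
      | ctr m =>
        rcases edge_ctr_ctr he with ⟨hlm, hintlm⟩
        have htri := D.tripleOverlap k l m hkl hlm hint hintlm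
        have hcml : D.c m < D.c l := by
          rcases htri with ⟨h1, _⟩ | ⟨h1, _⟩
          · exact absurd hcc (not_lt.2 h1.le)
          · exact h1
        have hne : m ≠ l := hlm.ne'
        have hdml : D.d m < D.d l := by
          by_contra hle
          exact D.nonnest m l hne ⟨hcml.le, not_lt.1 hle⟩
        exact ih l m hlm hintlm (hdml.trans hdi) hcml hch' hmem'

/-- Every central vertex on a chain from `ctr k` (with `i ∈ [c k, d k]`) ending
with `snk i` on it belongs to an interval containing `i`. -/
lemma allMem {D : IntervalData n t} {i : Fin n} :
    ∀ (p : List (V n t)) (k : Fin t), D.mem k i →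
      List.Chain (Edge D) (V.ctr k) p → V.snk i ∈ p →
      ∀ m : Fin t, V.ctr m ∈ p → D.mem m i := by
  intro p
  induction p with
  | nil => intro k _ _ h; simp at h
  | cons x q ih =>
    intro k hk hch hsnk m hm
    rcases List.chain_cons.1 hch with ⟨he, hch'⟩
    cases x with
    | src a => exact absurd he noEdgeToSrc
    | snk a =>
      cases q with
      | nil => simp at hm
      | cons y q' => exact absurd (List.chain_cons.1 hch').1 noEdgeFromSnk
    | ctr l =>
      rcases edge_ctr_ctr he with ⟨hkl, hint⟩
      by_cases hl : D.mem l i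
      · rcases List.mem_cons.1 hm with hx | hm'
        · obtain rfl : m = l := by injection hx
          exact hl
        · have hsnk' : V.snk i ∈ q := by
            rcases List.mem_cons.1 hsnk with hx | h
            · exact absurd hx (by simp)
            · exact h
          exact ih l hl hch' hsnk' m hm'
      · exfalso
        rcases not_and_or.1 hl with h1 | h2
        · have hic : (i : Fin n) < D.c l := not_le.1 h1
          have hcc : D.c k < D.c l := lt_of_le_of_lt hk.1 hic
          have hnot := noSnk_up (D := D) q k l hkl hint hic hcc hch'
          rcases List.mem_cons.1 hsnk with hx | h
          · exact absurd hx (by simp)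
          · exact hnot h
        · have hdi : D.d l < i := not_le.1 h2
          have hcc : D.c l < D.c k := by
            by_contra hle
            have : D.d k < D.d l := by
              by_contra h'
              exact D.nonnest k l hkl.ne ⟨not_lt.1 hle, not_lt.1 h'⟩
            exact absurd (hk.2.trans this.le) (not_le.2 hdi)
          have hnot := noSnk_down (D := D) q k l hkl hint hdi hcc hch'
          rcases List.mem_cons.1 hsnk with hx | h
          · exact absurd hx (by simp)
          · exact hnot h

lemma mem_of_getLast?' {α : Type*} {l : List α} {a : α} (h : l.getLast? = some a) :
    a ∈ l := by
  rcases List.mem_getLast?_eq_getLast (l := l) (x := a) h with ⟨hne, rfl⟩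
  exact List.getLast_mem hne

/-- Any central vertex on a path from source `i` to sink `i` lies in an
interval containing `i`. -/
lemma ctr_mem_of_path {D : IntervalData n t} {p : List (V n t)} {i : Fin n}
    (hp : IsPathFromTo D p i i) {m : Fin t} (hm : V.ctr m ∈ p) : D.mem m i := by
  obtain ⟨hne, hch, hhd, hlast⟩ := hp
  cases p with
  | nil => exact absurd rfl hne
  | cons x q =>
    obtain rfl : x = V.src i := by simpa using hhd
    have hsnkmem : V.snk i ∈ V.src i :: q := mem_of_getLast?' hlast
    have hsnkq : V.snk i ∈ q := by
      rcases List.mem_cons.1 hsnkmem with hx | h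
      · exact absurd hx (by simp)
      · exact h
    cases q with
    | nil => simp at hsnkq
    | cons y q' =>
      have hch2 : List.Chain (Edge D) (V.src i) (y :: q') := hch
      rcases List.chain_cons.1 hch2 with ⟨he, hch'⟩
      have hmq : V.ctr m ∈ y :: q' := by
        rcases List.mem_cons.1 hm with hx | h
        · exact absurd hx (by simp)
        · exact h
      cases he with
      | srcSnk _ hnone =>
        -- y = snk i, q' must be empty
        cases q' with
        | nil => simp at hmq
        | cons z q'' => exact absurd (List.chain_cons.1 hch').1 noEdgeFromSnk
      | srcCtr _ k hk hmin =>
        rcases List.mem_cons.1 hmq with hx | h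
        · obtain rfl : m = k := by injection hx
          exact hk
        · have hsnkq' : V.snk i ∈ q' := by
            rcases List.mem_cons.1 hsnkq with hx | hh
            · exact absurd hx (by simp)
            · exact hh
          exact allMem q' k hk hch' hsnkq' m h

/-- A vertex with no in-edges on a chain must be the head. -/
lemma head_of_no_in {E : V n t → V n t → Prop} :
    ∀ (p : List (V n t)) (x : V n t), p.Chain' E → x ∈ p →
      (∀ y, ¬ E y x) → p.head? = some x := by
  intro p
  induction p with
  | nil => intro x _ h; simp at h
  | cons a q ih =>
    intro x hch hmem hno
    rcases List.mem_cons.1 hmem with rfl | hq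
    · rfl
    · exfalso
      cases q with
      | nil => simp at hq
      | cons b q' =>
        have hch2 : List.Chain (E) a (b :: q') := hch
        rcases List.chain_cons.1 hch2 with ⟨he, hch'⟩
        have := ih x hch' hq hno
        have : b = x := by simpa using this
        subst this
        exact hno a he

/-- A vertex with no out-edges on a chain must be the last. -/
lemma last_of_no_out {E : V n t → V n t → Prop} :
    ∀ (p : List (V n t)) (x : V n t), p.Chain' E → x ∈ p →
      (∀ y, ¬ E x y) → p.getLast? = some x := by
  intro p
  induction p with
  | nil => intro x _ h; simp at h
  | cons a q ih =>
    intro x hch hmem hno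
    cases q with
    | nil =>
      obtain rfl : x = a := by simpa using hmem
      rfl
    | cons b q' =>
      have hch2 : List.Chain (E) a (b :: q') := hch
      rcases List.chain_cons.1 hch2 with ⟨he, hch'⟩
      rcases List.mem_cons.1 hmem with rfl | hq
      · exact absurd he (hno b)
      · rw [List.getLast?_cons_cons]
        exact ih x hch' hq hno

/-! ### canonical path -/

/-- The sorted list of (indices of) intervals containing `i`. -/
def KList (D : IntervalData n t) (i : Fin n) : List (Fin t) :=
  (Finset.univ.filter fun k => D.mem k i).sort (· ≤ ·)

lemma mem_KList {D : IntervalData n t} {i : Fin n} {k : Fin t} :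
    k ∈ KList D i ↔ D.mem k i := by
  simp [KList, Finset.mem_sort]

lemma KList_sorted {D : IntervalData n t} {i : Fin n} :
    (KList D i).Pairwise (· < ·) := (Finset.sortedLT_sort _).pairwise

def canonPath (D : IntervalData n t) (i : Fin n) : List (V n t) :=
  V.src i :: ((KList D i).map V.ctr ++ [V.snk i])

lemma chainOfSorted {D : IntervalData n t} {i : Fin n} :
    ∀ (L : List (Fin t)), L.Pairwise (· < ·) →
      (∀ m, D.mem m i → m ∈ L ∨ ∀ k' ∈ L, m < k') →
      (∀ k ∈ L, D.mem k i) →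
      L.Chain' (fun k l => Edge D (V.ctr k) (V.ctr l)) := by
  intro L
  induction L with
  | nil => intro _ _ _; exact List.isChain_nil
  | cons k L' ih =>
    intro hs hcomp hmem
    cases L' with
    | nil => exact List.isChain_singleton _
    | cons l L'' =>
      show List.IsChain _ _; rw [List.isChain_cons_cons]
      have hkl : k < l := (List.pairwise_cons.1 hs).1 l (by simp)
      have hpw := List.pairwise_cons.1 hs
      constructor
      · refine Edge.ctrCtr i k l hkl (hmem k (by simp)) (hmem l (by simp)) ?_
        intro m hkm hml hmmem
        rcases hcomp m hmmem with hin | hlt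
        · rcases List.mem_cons.1 hin with rfl | hin'
          · exact absurd hkm (lt_irrefl _)
          · rcases List.mem_cons.1 hin' with rfl | hin''
            · exact absurd hml (lt_irrefl _)
            · have : l < m := (List.pairwise_cons.1 hpw.2).1 m hin''
              exact absurd (this.trans hml) (lt_irrefl _)
        · exact absurd (hlt k (by simp)) (not_lt.2 hkm.le)
      · refine ih hpw.2 ?_ (fun a ha => hmem a (List.mem_cons_of_mem _ ha))
        intro m hmm
        rcases hcomp m hmm with hin | hlt
        · rcases List.mem_cons.1 hin with rfl | hin'
          · exact Or.inr (fun k' hk' => hpw.1 k' hk')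
          · exact Or.inl hin'
        · exact Or.inr (fun k' hk' => hlt k' (List.mem_cons_of_mem _ hk'))

lemma sorted_le_of_mem_getLast {α : Type*} [Preorder α] :
    ∀ (L : List α) (a : α), L.Pairwise (· < ·) → L.getLast? = some a →
      ∀ b ∈ L, b ≤ a := by
  intro L
  induction L with
  | nil => intro a _ h; simp at h
  | cons x L' ih =>
    intro a hs hlast b hb
    cases L' with
    | nil =>
      obtain rfl : x = a := by simpa using hlast
      obtain rfl : b = x := by simpa using hb
      exact le_refl _
    | cons y L'' =>
      rw [List.getLast?_cons_cons] at hlast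
      have hpw := List.pairwise_cons.1 hs
      rcases List.mem_cons.1 hb with rfl | hb'
      · have ha : a ∈ y :: L'' := mem_of_getLast?' hlast
        exact (hpw.1 a ha).le
      · exact ih a hpw.2 hlast b hb'

lemma canon_isPath (D : IntervalData n t) (i : Fin n) :
    IsPathFromTo D (canonPath D i) i i := by
  refine ⟨by simp [canonPath], ?_, by simp [canonPath], ?_⟩
  · -- Chain'
    have h1 : canonPath D i = ([V.src i] ++ (KList D i).map V.ctr) ++ [V.snk i] := by
      simp [canonPath]
    rw [h1]; show List.IsChain _ _; rw [List.isChain_append, List.isChain_append]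
    refine ⟨⟨by simp, ?_, ?_⟩, by simp, ?_⟩
    · -- chain' of map ctr KList
      rw [List.isChain_map]
      refine chainOfSorted (KList D i) KList_sorted ?_ (fun k hk => mem_KList.1 hk)
      intro m hm
      exact Or.inl (mem_KList.2 hm)
    · -- edge src i → head of map
      intro x hx y hy
      obtain rfl : V.src i = x := by simpa using hx
      cases hL : KList D i with
      | nil => simp [hL] at hy
      | cons k L' =>
        obtain rfl : V.ctr k = y := by
          rw [hL] at hy; simpa using hy
        refine Edge.srcCtr i k ?_ ?_
        · exact mem_KList.1 (by rw [hL]; simp)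
        · intro l hl hml
          have : l ∈ KList D i := mem_KList.2 hml
          rw [hL] at this
          rcases List.mem_cons.1 this with rfl | h'
          · exact absurd hl (lt_irrefl _)
          · have hs := KList_sorted (D := D) (i := i)
            rw [hL] at hs
            have : k < l := (List.pairwise_cons.1 hs).1 l h'
            exact absurd (this.trans hl) (lt_irrefl _)
    · -- edge last → snk i
      intro x hx y hy
      obtain rfl : V.snk i = y := by simpa using hy
      cases hL : KList D i with
      | nil =>
        rw [hL] at hx
        -- last of [src i] ++ [] is src i
        obtain rfl : V.src i = x := by simpa using hx
        refine Edge.srcSnk i (fun k hk => ?_)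
        have : k ∈ KList D i := mem_KList.2 hk
        rw [hL] at this; simp at this
      | cons k L' =>
        rw [hL] at hx
        have hmapne : ((k :: L').map (V.ctr : Fin t → V n t)) ≠ [] := by simp
        rw [List.getLast?_append_of_ne_nil _ hmapne] at hx
        -- x = ctr of last of KList
        have hlast' : ∃ a, (k :: L').getLast? = some a ∧ x = V.ctr a := by
          cases hgl : (k :: L').getLast? with
          | none => simp at hgl
          | some a =>
            refine ⟨a, rfl, ?_⟩
            have := List.getLast?_map (f := (V.ctr : Fin t → V n t)) (l := k :: L')
            rw [hgl] at this
            rw [this] at hx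
            simpa using hx.symm
        obtain ⟨a, hga, rfl⟩ := hlast'
        have hsort : (k :: L').Pairwise (· < ·) := by
          have := KList_sorted (D := D) (i := i); rwa [hL] at this
        have hamem : D.mem a i := mem_KList.1 (by rw [hL]; exact mem_of_getLast?' hga)
        refine Edge.ctrSnk i a hamem ?_
        intro l hal hml
        have hlmem : l ∈ k :: L' := by
          have := mem_KList.2 hml; rwa [hL] at this
        have := sorted_le_of_mem_getLast _ a hsort hga l hlmem
        exact absurd (lt_of_le_of_lt this hal) (lt_irrefl _)
  · -- getLast?
    have h1 : canonPath D i = (V.src i :: (KList D i).map V.ctr) ++ [V.snk i] := by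
      simp [canonPath]
    rw [h1, List.getLast?_concat]

lemma ctr_mem_canonPath {D : IntervalData n t} {i : Fin n} {k : Fin t}
    (hk : D.mem k i) : V.ctr k ∈ canonPath D i := by
  have : k ∈ KList D i := mem_KList.2 hk
  simpa [canonPath] using this

/-! ### main theorem -/

lemma pathsIntersect_iff (D : IntervalData n t) (i j : Fin n) (hij : i ≠ j) :
    PathsIntersect D i j ↔ ∃ k : Fin t, D.mem k i ∧ D.mem k j := by
  constructor
  · rintro ⟨p, q, hp, hq, x, hxp, hxq⟩
    cases x with
    | src a =>
      exfalso
      have h1 := head_of_no_in p (V.src a) hp.2.1 hxp (fun y => noEdgeToSrc)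
      have h2 := head_of_no_in q (V.src a) hq.2.1 hxq (fun y => noEdgeToSrc)
      rw [hp.2.2.1] at h1; rw [hq.2.2.1] at h2
      have hi : i = a := by injection (Option.some.inj h1)
      have hj : j = a := by injection (Option.some.inj h2)
      exact hij (hi.trans hj.symm)
    | snk a =>
      exfalso
      have h1 := last_of_no_out p (V.snk a) hp.2.1 hxp (fun y => noEdgeFromSnk)
      have h2 := last_of_no_out q (V.snk a) hq.2.1 hxq (fun y => noEdgeFromSnk)
      rw [hp.2.2.2] at h1; rw [hq.2.2.2] at h2
      have hi : i = a := by injection (Option.some.inj h1)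
      have hj : j = a := by injection (Option.some.inj h2)
      exact hij (hi.trans hj.symm)
    | ctr k =>
      exact ⟨k, ctr_mem_of_path hp hxp, ctr_mem_of_path hq hxq⟩
  · rintro ⟨k, hki, hkj⟩
    exact ⟨canonPath D i, canonPath D j, canon_isPath D i, canon_isPath D j,
      V.ctr k, ctr_mem_canonPath hki, ctr_mem_canonPath hkj⟩


/-- in a zig-zag network, the paths `π_i`, `π_j` (for `i < j`)
are vertex-disjoint iff no interval of the concatenation contains both `i` and
`j`; consequently `P(F)` depends only on the set of intervals. -/
theorem statement4 (n t : ℕ) (D : IntervalData n t) :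
    (∀ i j : Fin n, i < j →
      ((¬ PathsIntersect D i j) ↔ ∀ k : Fin t, ¬ (D.mem k i ∧ D.mem k j))) ∧
    (∀ t' : ℕ, ∀ D' : IntervalData n t',
      ((∀ k : Fin t, ∃ k' : Fin t', D'.c k' = D.c k ∧ D'.d k' = D.d k) ∧
       (∀ k' : Fin t', ∃ k : Fin t, D.c k = D'.c k' ∧ D.d k = D'.d k')) →
      ∀ i j : Fin n, PRel D i j ↔ PRel D' i j) := by
  constructor
  · intro i j hij
    rw [not_iff_comm, pathsIntersect_iff D i j hij.ne, not_forall]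
    constructor
    · rintro ⟨k, hk⟩; exact ⟨k, not_not.1 hk⟩
    · rintro ⟨k, hk⟩; exact ⟨k, not_not.2 hk⟩
  · intro t' D' hDD' i j
    obtain ⟨h1, h2⟩ := hDD'
    have hmemiff :
        (∃ k : Fin t, D.mem k i ∧ D.mem k j) ↔
        (∃ k' : Fin t', D'.mem k' i ∧ D'.mem k' j) := by
      constructor
      · rintro ⟨k, hk⟩
        obtain ⟨k', hc, hd⟩ := h1 k
        exact ⟨k', by simpa [IntervalData.mem, hc, hd] using hk⟩
      · rintro ⟨k', hk'⟩
        obtain ⟨k, hc, hd⟩ := h2 k'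
        exact ⟨k, by simpa [IntervalData.mem, hc, hd] using hk'⟩
    unfold PRel
    by_cases hij : i < j
    · simp only [hij, true_and]
      rw [not_iff_not, pathsIntersect_iff D i j hij.ne,
        pathsIntersect_iff D' i j hij.ne, hmemiff]
    · simp [hij]


end

end ZigZag
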